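/- Let 𝒢 be a groupoid with 𝒢₀ finite, A a unital 𝒢-graded algebra, and X, Z finite split 𝒢-sets via α=(X_g,α_g)_{g∈𝒢} and β=(Z_g,β_g)_{g∈𝒢} respectively. If φ : X → Z is a morphism of 𝒢-sets, then the map φ* : A #_β^𝒢 Z → A #_α^𝒢 X given by φ*(a_g δ_z) = Σ_{x ∈ I_{g,z}} a_g δ_x when I_{g,z} = {x∈X_{d(g)} : φ(x)=z} is nonempty, and φ*(a_g δ_z) = 0 otherwise, is a homomorphism of algebras. Moreover, if φ is injective then φ* is surjective, and if φ is surjective then φ* is injective. -/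

import Mathlib

open scoped Classical

noncomputable section

universe u v w

/-- A groupoid, presented as a set of morphisms with partially defined
composition.  `s g` is the domain (source) identity `d(g)`, `t g` the range
(target) identity `r(g)`; `mul g h` is the composite `gh`, meaningful when
`s g = t h`. -/
structure Gpd (G : Type u) where
  s : G → G
  t : G → G
  inv : G → G
  mul : G → G → G
  s_s : ∀ g, s (s g) = s g
  t_s : ∀ g, t (s g) = s g
  s_t : ∀ g, s (t g) = t g
  t_t : ∀ g, t (t g) = t g
  s_mul : ∀ g h, s g = t h → s (mul g h) = s h
  t_mul : ∀ g h, s g = t h → t (mul g h) = t g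
  mul_assoc : ∀ g h l, s g = t h → s h = t l → mul (mul g h) l = mul g (mul h l)
  mul_src : ∀ g, mul g (s g) = g
  tgt_mul : ∀ g, mul (t g) g = g
  s_inv : ∀ g, s (inv g) = t g
  t_inv : ∀ g, t (inv g) = s g
  inv_mul : ∀ g, mul (inv g) g = s g
  mul_inv : ∀ g, mul g (inv g) = t g

namespace Gpd

variable {G : Type u}

/-- `e` is an object (identity) of the groupoid. -/
def obj (𝒢 : Gpd G) (e : G) : Prop := 𝒢.s e = e

/-- The set `𝒢₀` of objects of the groupoid. -/
def Objs (𝒢 : Gpd G) : Set G := {e | 𝒢.obj e}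

end Gpd

/-- An action `α = (X_g, α_g)` of a groupoid `𝒢` on a set `X`:
`car g` is the subset `X_g` and `act g` restricts to the bijection
`α_g : X_{g⁻¹} → X_g`. -/
structure GpdSetAction {G : Type u} (𝒢 : Gpd G) (X : Type v) where
  car : G → Set X
  act : G → X → X
  car_t : ∀ g, car g = car (𝒢.t g)
  bijOn : ∀ g, Set.BijOn (act g) (car (𝒢.inv g)) (car g)
  act_id : ∀ e, 𝒢.obj e → ∀ x ∈ car e, act e x = x
  act_mul : ∀ g h, 𝒢.s g = 𝒢.t h → ∀ x ∈ car (𝒢.inv h),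
    act g (act h x) = act (𝒢.mul g h) x

/-- `X` is a split `𝒢`-set: `X` is the disjoint union of the `X_e`, `e ∈ 𝒢₀`. -/
def GpdSetAction.Split {G : Type u} {𝒢 : Gpd G} {X : Type v} (α : GpdSetAction 𝒢 X) : Prop :=
  ∀ x : X, ∃! e : G, 𝒢.obj e ∧ x ∈ α.car e

/-- The action is fully faithful: if `α_g` fixes some `x ∈ X_g ∩ X_{g⁻¹}`
then `g` is an identity. -/
def GpdSetAction.FullyFaithful {G : Type u} {𝒢 : Gpd G} {X : Type v}
    (α : GpdSetAction 𝒢 X) : Prop :=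
  ∀ g x, x ∈ α.car g ∩ α.car (𝒢.inv g) → α.act g x = x → 𝒢.obj g

/-- A `𝒢`-grading of the `k`-algebra `A`:  `A = ⊕_{g ∈ 𝒢} A_g` with
`A_g A_h ⊆ A_{gh}` for composable `g, h` and `A_g A_h = 0` otherwise. -/
structure GpdGrading {G : Type u} (𝒢 : Gpd G) (k : Type v) (A : Type w)
    [Field k] [Ring A] [Algebra k A] where
  comp : G → Submodule k A
  internal : DirectSum.IsInternal comp
  mul_mem : ∀ g h, 𝒢.s g = 𝒢.t h → ∀ a ∈ comp g, ∀ b ∈ comp h, a * b ∈ comp (𝒢.mul g h)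
  mul_eq_zero : ∀ g h, 𝒢.s g ≠ 𝒢.t h → ∀ a ∈ comp g, ∀ b ∈ comp h, a * b = 0

/-- The homogeneous component of degree `g` of `a ∈ A`. -/
noncomputable def GpdGrading.proj {G : Type u} {𝒢 : Gpd G} {k : Type v} {A : Type w}
    [Field k] [Ring A] [Algebra k A] (𝒜 : GpdGrading 𝒢 k A) (g : G) (a : A) : A :=
  ((Equiv.ofBijective _ 𝒜.internal).symm a g : A)

/-- `one : G → A` is a family of local units for the grading: each `one e`
(`e ∈ 𝒢₀`) is an identity element of `A_e` and `1_A = Σ_{e ∈ 𝒢₀} 1_e`. -/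
def IsIdFamily {G : Type u} {𝒢 : Gpd G} {k : Type v} {A : Type w}
    [Field k] [Ring A] [Algebra k A] (𝒜 : GpdGrading 𝒢 k A) (one : G → A) : Prop :=
  (∀ e, 𝒢.obj e → one e ∈ 𝒜.comp e ∧ ∀ a ∈ 𝒜.comp e, one e * a = a ∧ a * one e = a) ∧
  (1 : A) = ∑ᶠ e ∈ 𝒢.Objs, one e

/-- The multiplication of the smash product `A #_α^𝒢 X`, defined on the
ambient space of formal sums `Σ a_{(g,x)} δ_{(g,x)}`:
`(a δ_{(g,x)}) (b δ_{(h,y)}) = (a b) δ_{(gh, y)}` when `d(g) = r(h)` and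
`α_h(y) = x`, and `0` otherwise. -/
noncomputable def smashMul {G : Type u} {𝒢 : Gpd G} {X : Type v} {A : Type w} [Ring A]
    (α : GpdSetAction 𝒢 X) (f₁ f₂ : (G × X) →₀ A) : (G × X) →₀ A :=
  f₁.sum fun p a => f₂.sum fun q b =>
    if 𝒢.s p.1 = 𝒢.t q.1 ∧ α.act q.1 q.2 = p.2
    then Finsupp.single (𝒢.mul p.1 q.1, q.2) (a * b) else 0

/-- The underlying set of the smash product `A #_α^𝒢 X = ⊕_{g} ⊕_{x ∈ X_{d(g)}} A_g δ_x`: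
those formal sums whose `(g,x)`-coefficient lies in `A_g`, supported on pairs
with `x ∈ X_{d(g)}`. -/
def smashSet {G : Type u} {𝒢 : Gpd G} {X : Type v} {k : Type*} {A : Type w}
    [Field k] [Ring A] [Algebra k A]
    (α : GpdSetAction 𝒢 X) (𝒜 : GpdGrading 𝒢 k A) : Set ((G × X) →₀ A) :=
  {f | ∀ p : G × X, f p ∈ 𝒜.comp p.1 ∧ (f p ≠ 0 → p.2 ∈ α.car (𝒢.s p.1))}

/-- The identity element `Σ_{e ∈ 𝒢₀} Σ_{x ∈ X_e} 1_e δ_x` of the smash product. -/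
noncomputable def smashOne {G : Type u} {𝒢 : Gpd G} {X : Type v} {A : Type w} [Ring A]
    (α : GpdSetAction 𝒢 X) (one : G → A) : (G × X) →₀ A :=
  ∑ᶠ e ∈ 𝒢.Objs, ∑ᶠ x ∈ α.car e, Finsupp.single ((e, x) : G × X) (one e)

/-- The map `φ* : A #_β^𝒢 Z → A #_α^𝒢 X` induced by a map `φ : X → Z` of
`𝒢`-sets: `φ*(a_g δ_z) = Σ_{x ∈ I_{g,z}} a_g δ_x` where
`I_{g,z} = {x ∈ X_{d(g)} : φ(x) = z}` (the empty sum being `0`). -/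
noncomputable def morphStar {G : Type u} {𝒢 : Gpd G} {X : Type v} {Z : Type*} {A : Type w}
    [Ring A] (α : GpdSetAction 𝒢 X) (φ : X → Z) (f : (G × Z) →₀ A) : (G × X) →₀ A :=
  f.sum fun p a =>
    ∑ᶠ x ∈ {x | x ∈ α.car (𝒢.s p.1) ∧ φ x = p.2}, Finsupp.single ((p.1, x) : G × X) a

section Aux

variable {G : Type u} {𝒢 : Gpd G} {X : Type v} {Z : Type*} {A : Type w} [Ring A]

lemma finsum_single_eval [Finite X] (α : GpdSetAction 𝒢 X) (φ : X → Z)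
    (p : G × Z) (a : A) (g : G) (x : X) :
    (∑ᶠ x' ∈ {x' | x' ∈ α.car (𝒢.s p.1) ∧ φ x' = p.2},
        Finsupp.single ((p.1, x') : G × X) a) (g, x)
      = if p = (g, φ x) ∧ x ∈ α.car (𝒢.s g) then a else 0 := by
  classical
  have hfin : ({x' | x' ∈ α.car (𝒢.s p.1) ∧ φ x' = p.2} : Set X).Finite := Set.toFinite _
  rw [finsum_mem_eq_finite_toFinset_sum _ hfin]
  rw [Finset.sum_apply']
  have h1 : ∀ x' : X, (Finsupp.single ((p.1, x') : G × X) a) ((g, x) : G × X)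
      = if x' = x then (if p.1 = g then a else 0) else 0 := by
    intro x'
    rw [Finsupp.single_apply]
    by_cases h1 : x' = x <;> by_cases h2 : p.1 = g <;>
      simp [h1, h2, Prod.ext_iff]
  simp only [h1]
  rw [Finset.sum_ite_eq' hfin.toFinset x]
  simp only [Set.Finite.mem_toFinset, Set.mem_setOf_eq]
  by_cases hp : p = (g, φ x)
  · subst hp
    simp [and_comm]
  · have h3 : ¬(p = (g, φ x) ∧ x ∈ α.car (𝒢.s g)) := fun h => hp h.1
    rw [if_neg h3]
    split_ifs with h1 h2
    · exact absurd (Prod.ext h2 h1.2.symm) hp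
    · rfl
    · rfl

lemma morphStar_apply [Finite X] (α : GpdSetAction 𝒢 X) (φ : X → Z)
    (f : (G × Z) →₀ A) (g : G) (x : X) :
    morphStar α φ f (g, x) = if x ∈ α.car (𝒢.s g) then f (g, φ x) else 0 := by
  classical
  rw [morphStar, Finsupp.sum_apply]
  simp only [finsum_single_eval α φ]
  by_cases hx : x ∈ α.car (𝒢.s g)
  · simp only [hx, and_true, if_pos]
    rw [Finsupp.sum, Finset.sum_ite_eq' f.support ((g, φ x) : G × Z)]
    by_cases hmem : ((g, φ x) : G × Z) ∈ f.support
    · rw [if_pos hmem]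
    · rw [if_neg hmem, eq_comm, Finsupp.notMem_support_iff.mp hmem]
  · simp [hx]

lemma morphStar_add [Finite X] (α : GpdSetAction 𝒢 X) (φ : X → Z)
    (f₁ f₂ : (G × Z) →₀ A) :
    morphStar α φ (f₁ + f₂) = morphStar α φ f₁ + morphStar α φ f₂ := by
  ext p
  obtain ⟨g, x⟩ := p
  simp only [Finsupp.add_apply, morphStar_apply]
  split_ifs <;> simp

lemma morphStar_zero [Finite X] (α : GpdSetAction 𝒢 X) (φ : X → Z) :
    morphStar α φ (0 : (G × Z) →₀ A) = 0 := by
  ext p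
  obtain ⟨g, x⟩ := p
  simp [morphStar_apply]

lemma morphStar_smul [Finite X] {k : Type*} [Field k] [Algebra k A]
    (α : GpdSetAction 𝒢 X) (φ : X → Z) (c : k) (f : (G × Z) →₀ A) :
    morphStar α φ (c • f) = c • morphStar α φ f := by
  ext p
  obtain ⟨g, x⟩ := p
  simp only [Finsupp.smul_apply, morphStar_apply]
  split_ifs <;> simp

lemma morphStar_finset_sum [Finite X] (α : GpdSetAction 𝒢 X) (φ : X → Z)
    {ι : Type*} (s : Finset ι) (u : ι → (G × Z) →₀ A) :
    morphStar α φ (∑ i ∈ s, u i) = ∑ i ∈ s, morphStar α φ (u i) := by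
  classical
  induction s using Finset.induction_on with
  | empty => simp [morphStar_zero]
  | insert _ _ hns ih => simp [Finset.sum_insert hns, morphStar_add, ih]

lemma morphStar_single [Finite X] (α : GpdSetAction 𝒢 X) (φ : X → Z)
    (p : G × Z) (a : A) :
    morphStar α φ (Finsupp.single p a)
      = ∑ x ∈ (Set.toFinite {x | x ∈ α.car (𝒢.s p.1) ∧ φ x = p.2}).toFinset,
          Finsupp.single ((p.1, x) : G × X) a := by
  rw [morphStar, Finsupp.sum_single_index (by simp),
    finsum_mem_eq_finite_toFinset_sum _ (Set.toFinite _)]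

lemma smashMul_zero_left (α : GpdSetAction 𝒢 X) (v : (G × X) →₀ A) :
    smashMul α 0 v = 0 := by
  rw [smashMul, Finsupp.sum_zero_index]

lemma smashMul_zero_right (α : GpdSetAction 𝒢 X) (u : (G × X) →₀ A) :
    smashMul α u 0 = 0 := by
  rw [smashMul]
  simp [Finsupp.sum_zero_index]

lemma smashMul_add_left (α : GpdSetAction 𝒢 X) (u₁ u₂ v : (G × X) →₀ A) :
    smashMul α (u₁ + u₂) v = smashMul α u₁ v + smashMul α u₂ v := by
  rw [smashMul, smashMul, smashMul, Finsupp.sum_add_index']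
  · intro p
    simp
  · intro p a₁ a₂
    rw [← Finsupp.sum_add]
    apply Finsupp.sum_congr
    intro q _
    split_ifs <;> simp [add_mul, Finsupp.single_add]

lemma smashMul_add_right (α : GpdSetAction 𝒢 X) (u v₁ v₂ : (G × X) →₀ A) :
    smashMul α u (v₁ + v₂) = smashMul α u v₁ + smashMul α u v₂ := by
  rw [smashMul, smashMul, smashMul, ← Finsupp.sum_add]
  apply Finsupp.sum_congr
  intro p _
  rw [Finsupp.sum_add_index']
  · intro q
    simp
  · intro q b₁ b₂
    split_ifs <;> simp [mul_add, Finsupp.single_add]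

lemma smashMul_sum_left (α : GpdSetAction 𝒢 X) {ι : Type*} (s : Finset ι)
    (u : ι → (G × X) →₀ A) (v : (G × X) →₀ A) :
    smashMul α (∑ i ∈ s, u i) v = ∑ i ∈ s, smashMul α (u i) v := by
  classical
  induction s using Finset.induction_on with
  | empty => simp [smashMul_zero_left]
  | insert _ _ hns ih => simp [Finset.sum_insert hns, smashMul_add_left, ih]

lemma smashMul_sum_right (α : GpdSetAction 𝒢 X) {ι : Type*} (s : Finset ι)
    (u : (G × X) →₀ A) (v : ι → (G × X) →₀ A) :
    smashMul α u (∑ i ∈ s, v i) = ∑ i ∈ s, smashMul α u (v i) := by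
  classical
  induction s using Finset.induction_on with
  | empty => simp [smashMul_zero_right]
  | insert _ _ hns ih => simp [Finset.sum_insert hns, smashMul_add_right, ih]

lemma smashMul_single_single (α : GpdSetAction 𝒢 X) (p q : G × X) (a b : A) :
    smashMul α (Finsupp.single p a) (Finsupp.single q b)
      = if 𝒢.s p.1 = 𝒢.t q.1 ∧ α.act q.1 q.2 = p.2
        then Finsupp.single ((𝒢.mul p.1 q.1, q.2) : G × X) (a * b) else 0 := by
  rw [smashMul, Finsupp.sum_single_index (by simp), Finsupp.sum_single_index (by simp)]

lemma morphStar_smashMul_term [Finite X] (α : GpdSetAction 𝒢 X) (β : GpdSetAction 𝒢 Z)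
    (φ : X → Z)
    (hφ₂ : ∀ g, ∀ x ∈ α.car (𝒢.inv g), φ (α.act g x) = β.act g (φ x))
    (p q : G × Z) (a b : A) :
    morphStar α φ (if 𝒢.s p.1 = 𝒢.t q.1 ∧ β.act q.1 q.2 = p.2
        then Finsupp.single ((𝒢.mul p.1 q.1, q.2) : G × Z) (a * b) else 0)
      = smashMul α (morphStar α φ (Finsupp.single p a))
          (morphStar α φ (Finsupp.single q b)) := by
  classical
  -- notation for the fibers
  have hcarinv : α.car (𝒢.inv q.1) = α.car (𝒢.s q.1) := by
    rw [α.car_t (𝒢.inv q.1), 𝒢.t_inv]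
  rw [morphStar_single, morphStar_single, smashMul_sum_left]
  simp only [smashMul_sum_right, smashMul_single_single]
  by_cases hst : 𝒢.s p.1 = 𝒢.t q.1
  · by_cases hβ : β.act q.1 q.2 = p.2
    · rw [if_pos ⟨hst, hβ⟩, morphStar_single]
      -- LHS fiber set equals the fiber of q
      have hsq : 𝒢.s (𝒢.mul p.1 q.1) = 𝒢.s q.1 := 𝒢.s_mul _ _ hst
      rw [Finset.sum_comm]
      refine Finset.sum_congr (by simp [hsq]) ?_
      intro x'' hx''
      simp only [Set.Finite.mem_toFinset, Set.mem_setOf_eq, hsq] at hx''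
      obtain ⟨hx''car, hx''φ⟩ := hx''
      have hx''inv : x'' ∈ α.car (𝒢.inv q.1) := hcarinv ▸ hx''car
      have hmem : α.act q.1 x'' ∈ ({x | x ∈ α.car (𝒢.t q.1) ∧ φ x = p.2} : Set X) := by
        constructor
        · have h1 : α.act q.1 x'' ∈ α.car q.1 := (α.bijOn q.1).mapsTo hx''inv
          rw [α.car_t q.1] at h1
          exact h1
        · rw [hφ₂ q.1 x'' hx''inv, hx''φ, hβ]
      simp only [hst, true_and]
      rw [Finset.sum_ite_eq _ (α.act q.1 x'')]
      split_ifs with h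
      · rfl
      · simp only [Set.Finite.mem_toFinset] at h
        exact absurd hmem h
    · rw [if_neg (by rintro ⟨-, h⟩; exact hβ h), morphStar_zero]
      refine (Finset.sum_eq_zero ?_).symm
      intro x' hx'
      refine Finset.sum_eq_zero ?_
      intro x'' hx''
      simp only [Set.Finite.mem_toFinset, Set.mem_setOf_eq] at hx' hx''
      rw [if_neg]
      rintro ⟨-, hact⟩
      have hx''inv : x'' ∈ α.car (𝒢.inv q.1) := hcarinv ▸ hx''.1
      apply hβ
      rw [← hx''.2, ← hφ₂ q.1 x'' hx''inv, hact, hx'.2]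
  · rw [if_neg (by rintro ⟨h, -⟩; exact hst h), morphStar_zero]
    refine (Finset.sum_eq_zero ?_).symm
    intro x' _
    refine Finset.sum_eq_zero ?_
    intro x'' _
    rw [if_neg (by rintro ⟨h, -⟩; exact hst h)]

lemma morphStar_smashMul [Finite X] (α : GpdSetAction 𝒢 X) (β : GpdSetAction 𝒢 Z)
    (φ : X → Z)
    (hφ₂ : ∀ g, ∀ x ∈ α.car (𝒢.inv g), φ (α.act g x) = β.act g (φ x))
    (f₁ f₂ : (G × Z) →₀ A) :
    morphStar α φ (smashMul β f₁ f₂)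
      = smashMul α (morphStar α φ f₁) (morphStar α φ f₂) := by
  classical
  have h₁ : morphStar α φ f₁
      = ∑ p ∈ f₁.support, morphStar α φ (Finsupp.single p (f₁ p)) := by
    rw [← morphStar_finset_sum]
    congr 1
    exact (Finsupp.sum_single f₁).symm
  have h₂ : morphStar α φ f₂
      = ∑ q ∈ f₂.support, morphStar α φ (Finsupp.single q (f₂ q)) := by
    rw [← morphStar_finset_sum]
    congr 1
    exact (Finsupp.sum_single f₂).symm
  rw [h₁, h₂, smashMul_sum_left]
  simp only [smashMul_sum_right]
  rw [smashMul, Finsupp.sum]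
  rw [morphStar_finset_sum]
  refine Finset.sum_congr rfl ?_
  intro p _
  rw [Finsupp.sum, morphStar_finset_sum]
  refine Finset.sum_congr rfl ?_
  intro q _
  exact morphStar_smashMul_term α β φ hφ₂ p q (f₁ p) (f₂ q)

end Aux

/-- A morphism of finite split `𝒢`-sets `φ : X → Z` induces
an algebra homomorphism `φ* : A #_β^𝒢 Z → A #_α^𝒢 X`; moreover `φ*` is
surjective when `φ` is injective, and injective when `φ` is surjective. -/
theorem smash_product_morphStar_algebra_hom
    {G : Type u} (𝒢 : Gpd G) {X : Type v} {Z : Type*} (k : Type*) (A : Type w)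
    [Field k] [Ring A] [Algebra k A] [Finite X] [Finite Z]
    (hG₀ : 𝒢.Objs.Finite) (𝒜 : GpdGrading 𝒢 k A)
    (α : GpdSetAction 𝒢 X) (β : GpdSetAction 𝒢 Z)
    (hsplitX : α.Split) (hsplitZ : β.Split)
    (φ : X → Z)
    -- φ is a morphism of 𝒢-sets
    (hφ₁ : ∀ g, φ '' α.car g ⊆ β.car g)
    (hφ₂ : ∀ g, ∀ x ∈ α.car (𝒢.inv g), φ (α.act g x) = β.act g (φ x)) :
    -- φ* maps the smash product over Z into the smash product over X
    (∀ f ∈ smashSet β 𝒜, morphStar α φ f ∈ smashSet α 𝒜) ∧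
    -- φ* is a homomorphism of algebras
    (∀ f₁ ∈ smashSet β 𝒜, ∀ f₂ ∈ smashSet β 𝒜,
      morphStar α φ (f₁ + f₂) = morphStar α φ f₁ + morphStar α φ f₂) ∧
    (∀ (c : k), ∀ f ∈ smashSet β 𝒜, morphStar α φ (c • f) = c • morphStar α φ f) ∧
    (∀ f₁ ∈ smashSet β 𝒜, ∀ f₂ ∈ smashSet β 𝒜,
      morphStar α φ (smashMul β f₁ f₂) = smashMul α (morphStar α φ f₁) (morphStar α φ f₂)) ∧
    -- if φ is injective then φ* is surjective
    (Function.Injective φ → Set.SurjOn (morphStar α φ) (smashSet β 𝒜) (smashSet α 𝒜)) ∧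
    -- if φ is surjective then φ* is injective
    (Function.Surjective φ → Set.InjOn (morphStar α φ) (smashSet β 𝒜)) := by
  classical
  refine ⟨?_, ?_, ?_, ?_, ?_, ?_⟩
  · -- φ* maps the smash product over Z into the smash product over X
    intro f hf p
    obtain ⟨g, x⟩ := p
    rw [morphStar_apply]
    constructor
    · split_ifs with h
      · exact (hf (g, φ x)).1
      · exact Submodule.zero_mem _
    · intro hne
      by_contra hx
      rw [if_neg hx] at hne
      exact hne rfl
  · intro f₁ _ f₂ _
    exact morphStar_add α φ f₁ f₂
  · intro c f _
    exact morphStar_smul α φ c f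
  · intro f₁ _ f₂ _
    exact morphStar_smashMul α β φ hφ₂ f₁ f₂
  · -- φ injective → φ* surjective
    intro hinj F hF
    refine ⟨Finsupp.onFinset (F.support.image (fun r : G × X => (r.1, φ r.2)))
      (fun p => if h : ∃ x, x ∈ α.car (𝒢.s p.1) ∧ φ x = p.2 then F (p.1, h.choose) else 0)
      ?_, ?_, ?_⟩
    · intro p hp
      by_cases h : ∃ x, x ∈ α.car (𝒢.s p.1) ∧ φ x = p.2
      · have hFne : F (p.1, h.choose) ≠ 0 := by simpa [dif_pos h] using hp
        refine Finset.mem_image.mpr ⟨(p.1, h.choose), Finsupp.mem_support_iff.mpr hFne, ?_⟩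
        exact Prod.ext rfl h.choose_spec.2
      · simp [dif_neg h] at hp
    · -- membership in the smash product over Z
      intro p
      simp only [Finsupp.onFinset_apply]
      constructor
      · split_ifs with h
        · exact (hF (p.1, h.choose)).1
        · exact Submodule.zero_mem _
      · intro hne
        by_cases h : ∃ x, x ∈ α.car (𝒢.s p.1) ∧ φ x = p.2
        · obtain ⟨hc, hφc⟩ := h.choose_spec
          rw [← hφc]
          exact hφ₁ (𝒢.s p.1) ⟨_, hc, rfl⟩
        · rw [dif_neg h] at hne
          exact absurd rfl hne
    · -- φ* of this element is F
      ext r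
      obtain ⟨g, x⟩ := r
      rw [morphStar_apply]
      by_cases hx : x ∈ α.car (𝒢.s g)
      · rw [if_pos hx]
        simp only [Finsupp.onFinset_apply]
        have h : ∃ x', x' ∈ α.car (𝒢.s g) ∧ φ x' = φ x := ⟨x, hx, rfl⟩
        rw [dif_pos h, hinj h.choose_spec.2]
      · rw [if_neg hx]
        by_contra hne
        exact hx ((hF (g, x)).2 fun h0 => hne h0.symm)
  · -- φ surjective → φ* injective
    intro hsurj f₁ h₁ f₂ h₂ heq
    ext p
    obtain ⟨g, z⟩ := p
    by_cases hz : z ∈ β.car (𝒢.s g)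
    · obtain ⟨x, hx⟩ := hsurj z
      obtain ⟨e, ⟨he, hxe⟩, -⟩ := hsplitX x
      have hze : z ∈ β.car e := hx ▸ hφ₁ e ⟨x, hxe, rfl⟩
      obtain ⟨e₀, he₀, huniq⟩ := hsplitZ z
      have h1 : e = e₀ := huniq e ⟨he, hze⟩
      have h2 : 𝒢.s g = e₀ := huniq (𝒢.s g) ⟨𝒢.s_s g, hz⟩
      have hxg : x ∈ α.car (𝒢.s g) := by rw [h2, ← h1]; exact hxe
      have h3 : morphStar α φ f₁ (g, x) = morphStar α φ f₂ (g, x) := by rw [heq]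
      rw [morphStar_apply, morphStar_apply, if_pos hxg, if_pos hxg, hx] at h3
      exact h3
    · have e₁ : f₁ (g, z) = 0 := by
        by_contra hne
        exact hz ((h₁ (g, z)).2 hne)
      have e₂ : f₂ (g, z) = 0 := by
        by_contra hne
        exact hz ((h₂ (g, z)).2 hne)
      rw [e₁, e₂]


end
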